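/- arXiv:1204.3239 — 3 statements merged into one kernel-verified Lean document; each statement's English description precedes it below -/
import Mathlib

section
/- Let σ be a permutation of {1,…,n} and let a < b be elements such that every element c strictly between a and b in the one-line notation of σ satisfies c < a or c > b. If τ is obtained from σ by transposing a and b (leaving all other elements fixed), then π(σ)/π(τ) = p_{a,b}/p_{b,a}, provided that the probabilities P have league structure: p_{i,j} = q_{i∨j} for all i < j, where i∨j denotes the lowest common ancestor in a fixed rooted binary tree T with leaves 1,…,n, and every element between a and b in σ is not a descendant of a∨b in T. -/
/-- A rooted binary tree with leaves labeled by `Fin n` and internal nodes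
labeled by real numbers (the league probabilities). -/
inductive LBTree (n : ℕ) : Type
  | leaf (x : Fin n) : LBTree n
  | node (q : ℝ) (l r : LBTree n) : LBTree n

namespace LBTree

/-- The list of leaf labels, from left to right. -/
def leaves {n : ℕ} : LBTree n → List (Fin n)
  | .leaf x => [x]
  | .node _ l r => l.leaves ++ r.leaves

/-- The label at the root, if the root is an internal node. -/
def rootQ {n : ℕ} : LBTree n → Option ℝ
  | .leaf _ => none
  | .node q _ _ => some q

/-- The subtree rooted at the lowest common ancestor of the leaves `i` and `j`
(if both occur in the tree). -/
def lcaSub {n : ℕ} : LBTree n → Fin n → Fin n → Option (LBTree n)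
  | .leaf x, i, j => if i = x ∧ j = x then some (.leaf x) else none
  | .node q l r, i, j =>
      if i ∈ l.leaves ∧ j ∈ l.leaves then l.lcaSub i j
      else if i ∈ r.leaves ∧ j ∈ r.leaves then r.lcaSub i j
      else if i ∈ l.leaves ++ r.leaves ∧ j ∈ l.leaves ++ r.leaves then
        some (.node q l r)
      else none

end LBTree

/-- The (unnormalized) stationary weight `π(σ) ∝ ∏_{k < ℓ} p_{σ(k), σ(ℓ)}`. -/
def permWeight (n : ℕ) (P : Fin n → Fin n → ℝ) (σ : Equiv.Perm (Fin n)) : ℝ :=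
  ∏ q ∈ Finset.univ.filter (fun q : Fin n × Fin n => q.1 < q.2), P (σ q.1) (σ q.2)


namespace LBTree

theorem lcaSub_comm {n : ℕ} (T : LBTree n) (i j : Fin n) :
    T.lcaSub i j = T.lcaSub j i := by
  induction T with
  | leaf x => simp [lcaSub, and_comm]
  | node q l r ihl ihr => simp [lcaSub, and_comm, ihl, ihr]

theorem lcaSub_key {n : ℕ} (T : LBTree n) (hnd : T.leaves.Nodup)
    (a b c : Fin n) (t : LBTree n) (ht : T.lcaSub a b = some t)
    (hc : c ∈ T.leaves) (hct : c ∉ t.leaves) :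
    T.lcaSub a c = T.lcaSub b c := by
  induction T with
  | leaf x =>
    rw [lcaSub] at ht
    split at ht
    · have htt : LBTree.leaf x = t := Option.some.inj ht
      subst htt
      exact absurd hc hct
    · exact absurd ht (by simp)
  | node q l r ihl ihr =>
    rw [leaves, List.nodup_append] at hnd
    obtain ⟨hndl, hndr, hdisj⟩ := hnd
    rw [leaves, List.mem_append] at hc
    rw [lcaSub] at ht
    split at ht
    · rename_i h
      obtain ⟨hal, hbl⟩ := h
      rcases hc with hcl | hcr
      · rw [lcaSub, if_pos ⟨hal, hcl⟩, lcaSub, if_pos ⟨hbl, hcl⟩]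
        exact ihl hndl ht hcl
      · have hcnl : c ∉ l.leaves := fun h' => hdisj c h' c hcr rfl
        have hanr : a ∉ r.leaves := fun h' => hdisj a hal a h' rfl
        have hbnr : b ∉ r.leaves := fun h' => hdisj b hbl b h' rfl
        rw [lcaSub, if_neg (by tauto), if_neg (by tauto),
          if_pos ⟨by simp [hal], by simp [hcr]⟩,
          lcaSub, if_neg (by tauto), if_neg (by tauto),
          if_pos ⟨by simp [hbl], by simp [hcr]⟩]
    · split at ht
      · rename_i h1 h2
        obtain ⟨har, hbr⟩ := h2
        have hanl : a ∉ l.leaves := fun h' => hdisj a h' a har rfl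
        have hbnl : b ∉ l.leaves := fun h' => hdisj b h' b hbr rfl
        rcases hc with hcl | hcr
        · have hcnr : c ∉ r.leaves := fun h' => hdisj c hcl c h' rfl
          rw [lcaSub, if_neg (by tauto), if_neg (by tauto),
            if_pos ⟨by simp [har], by simp [hcl]⟩,
            lcaSub, if_neg (by tauto), if_neg (by tauto),
            if_pos ⟨by simp [hbr], by simp [hcl]⟩]
        · rw [lcaSub, if_neg (by tauto), if_pos ⟨har, hcr⟩,
            lcaSub, if_neg (by tauto), if_pos ⟨hbr, hcr⟩]
          exact ihr hndr ht hcr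
      · split at ht
        · have htt : LBTree.node q l r = t := Option.some.inj ht
          subst htt
          rw [leaves, List.mem_append] at hct
          exact absurd hc hct
        · exact absurd ht (by simp)

end LBTree

/-- If `P` has league structure `T` (i.e. `p_{i,j} = q_{i ∨ j}` for `i < j`), `a < b`,
`a` appears before `b` in `σ`, and every element `c` strictly between `a` and `b`
in the one-line notation of `σ` satisfies `c < a` or `c > b` and is not a descendant
of `a ∨ b` in `T`, then transposing `a` and `b` changes the weight by exactly
the factor `p_{a,b} / p_{b,a}`; equivalently `π(σ) · p_{b,a} = π(τ) · p_{a,b}`. -/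
theorem league_transposition_ratio (n : ℕ) (T : LBTree n) (P : Fin n → Fin n → ℝ)
    (hT : T.leaves = List.finRange n)
    (hq : ∀ i j : Fin n, i < j → (1 : ℝ) / 2 ≤ P i j ∧ P i j ≤ 1)
    (hrev : ∀ i j : Fin n, i ≠ j → P j i = 1 - P i j)
    (hstruct : ∀ i j : Fin n, i < j →
      (T.lcaSub i j).bind LBTree.rootQ = some (P i j))
    (σ : Equiv.Perm (Fin n)) (a b : Fin n) (hab : a < b)
    (horder : σ.symm a < σ.symm b)
    (hbetween : ∀ m : Fin n, σ.symm a < m → m < σ.symm b →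
      ((σ m < a ∨ b < σ m) ∧
        ∀ t : LBTree n, T.lcaSub a b = some t → σ m ∉ t.leaves)) :
    permWeight n P σ * P b a =
      permWeight n P (Equiv.swap a b * σ) * P a b := by
  set i0 := σ.symm a with hi0def
  set j0 := σ.symm b with hj0def
  have hσi0 : σ i0 = a := σ.apply_symm_apply a
  have hσj0 : σ j0 = b := σ.apply_symm_apply b
  have hij : i0 < j0 := horder
  have hijne : i0 ≠ j0 := ne_of_lt hij
  set τ : Equiv.Perm (Fin n) := Equiv.swap a b * σ with hτdef
  have hτs : ∀ k, τ k = σ (Equiv.swap i0 j0 k) := by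
    intro k
    have h1 : σ * Equiv.swap i0 j0 = Equiv.swap (σ i0) (σ j0) * σ :=
      Equiv.mul_swap_eq_swap_mul σ i0 j0
    rw [hσi0, hσj0] at h1
    have := congrArg (fun e : Equiv.Perm (Fin n) => e k) h1
    simpa [hτdef, Equiv.Perm.mul_apply] using this.symm
  have hτm : ∀ m : Fin n, m ≠ i0 → m ≠ j0 → τ m = σ m := by
    intro m h1 h2
    rw [hτs, Equiv.swap_apply_of_ne_of_ne h1 h2]
  have hτi0 : τ i0 = b := by rw [hτs, Equiv.swap_apply_left, hσj0]
  have hτj0 : τ j0 = a := by rw [hτs, Equiv.swap_apply_right, hσi0]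
  obtain ⟨t, ht⟩ : ∃ t, T.lcaSub a b = some t := by
    rcases h : T.lcaSub a b with _ | t
    · have := hstruct a b hab; rw [h] at this; simp at this
    · exact ⟨t, rfl⟩
  have hnd : T.leaves.Nodup := hT ▸ List.nodup_finRange n
  have hmem : ∀ c : Fin n, c ∈ T.leaves := fun c => hT ▸ List.mem_finRange c
  have hPkey : ∀ m : Fin n, i0 < m → m < j0 →
      P a (σ m) = P b (σ m) ∧ P (σ m) a = P (σ m) b := by
    intro m h1 h2
    obtain ⟨hside, hnotin⟩ := hbetween m h1 h2
    set c := σ m with hcdef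
    have hcnt : c ∉ t.leaves := hnotin t ht
    have hca : c ≠ a := by
      intro h; apply ne_of_lt h1; rw [hi0def, ← h, hcdef, Equiv.symm_apply_apply]
    have hcb : c ≠ b := by
      intro h; apply ne_of_lt h2; rw [hj0def, ← h, hcdef, Equiv.symm_apply_apply]
    have hlca : T.lcaSub a c = T.lcaSub b c :=
      LBTree.lcaSub_key T hnd a b c t ht (hmem c) hcnt
    rcases hside with hlt | hgt
    · have e1 := hstruct c a hlt
      have e2 := hstruct c b (lt_trans hlt hab)
      rw [LBTree.lcaSub_comm T c a, hlca, ← LBTree.lcaSub_comm T c b, e2] at e1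
      have hPca : P c a = P c b := (Option.some.inj e1).symm
      constructor
      · rw [hrev c a hca, hrev c b hcb, hPca]
      · exact hPca
    · have e1 := hstruct a c (lt_trans hab hgt)
      have e2 := hstruct b c hgt
      rw [hlca, e2] at e1
      have hPac : P a c = P b c := (Option.some.inj e1).symm
      constructor
      · exact hPac
      · rw [hrev a c hca.symm, hrev b c hcb.symm, hPac]
  have hmemS : (i0, j0) ∈ Finset.univ.filter (fun q : Fin n × Fin n => q.1 < q.2) := by
    simp [hij]
  unfold permWeight
  rw [← Finset.mul_prod_erase _ (fun p : Fin n × Fin n => P (σ p.1) (σ p.2)) hmemS,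
      ← Finset.mul_prod_erase _ (fun p : Fin n × Fin n => P (τ p.1) (τ p.2)) hmemS]
  simp only [hσi0, hσj0, hτi0, hτj0]
  set S' := (Finset.univ.filter (fun q : Fin n × Fin n => q.1 < q.2)).erase (i0, j0) with hS'
  have hprod : ∏ p ∈ S', P (τ p.1) (τ p.2) = ∏ p ∈ S', P (σ p.1) (σ p.2) := by
    set e : Fin n × Fin n → Fin n × Fin n := fun p =>
      if (i0 < p.1 ∧ p.1 < j0) ∨ (i0 < p.2 ∧ p.2 < j0) then p
      else (Equiv.swap i0 j0 p.1, Equiv.swap i0 j0 p.2) with hedef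
    have he : ∀ k l : Fin n, e (k, l) =
        if (i0 < k ∧ k < j0) ∨ (i0 < l ∧ l < j0) then (k, l)
        else (Equiv.swap i0 j0 k, Equiv.swap i0 j0 l) := fun k l => rfl
    have hmemS' : ∀ p : Fin n × Fin n, p ∈ S' ↔ (p.1 < p.2 ∧ p ≠ (i0, j0)) := by
      intro p
      rw [hS', Finset.mem_erase, Finset.mem_filter]
      simp [and_comm]
    have hnb : ∀ x : Fin n, ¬(i0 < x ∧ x < j0) →
        ¬(i0 < Equiv.swap i0 j0 x ∧ Equiv.swap i0 j0 x < j0) := by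
      intro x hx
      by_cases h1 : x = i0
      · subst h1; rw [Equiv.swap_apply_left]; simp
      · by_cases h2 : x = j0
        · subst h2; rw [Equiv.swap_apply_right]; simp
        · rw [Equiv.swap_apply_of_ne_of_ne h1 h2]; exact hx
    have hemem : ∀ p ∈ S', e p ∈ S' := by
      rintro ⟨k, l⟩ hp
      rw [hmemS'] at hp
      obtain ⟨hkl, hpne⟩ := hp
      by_cases hcond : (i0 < k ∧ k < j0) ∨ (i0 < l ∧ l < j0)
      · have e1 : e (k, l) = (k, l) := by rw [he, if_pos hcond]
        rw [hmemS', e1]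
        exact ⟨hkl, hpne⟩
      · have e1 : e (k, l) = (Equiv.swap i0 j0 k, Equiv.swap i0 j0 l) := by
          rw [he, if_neg hcond]
        rw [hmemS', e1]
        obtain ⟨hc1, hc2⟩ := not_or.mp hcond
        by_cases hk1 : k = i0
        · subst hk1
          have hlgt : j0 < l := by
            rcases lt_trichotomy l j0 with h | h | h
            · exact absurd ⟨hkl, h⟩ hc2
            · exact absurd (by rw [h]) hpne
            · exact h
          rw [Equiv.swap_apply_left,
            Equiv.swap_apply_of_ne_of_ne (hij.trans hlgt).ne' hlgt.ne']
          refine ⟨hlgt, fun h => ?_⟩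
          rw [Prod.mk.injEq] at h
          exact hijne h.1.symm
        · by_cases hk2 : k = j0
          · subst hk2
            have hl1 : l ≠ i0 := (hij.trans hkl).ne'
            have hl2 : l ≠ j0 := hkl.ne'
            rw [Equiv.swap_apply_right, Equiv.swap_apply_of_ne_of_ne hl1 hl2]
            refine ⟨hij.trans hkl, fun h => ?_⟩
            rw [Prod.mk.injEq] at h
            exact hl2 h.2
          · rw [Equiv.swap_apply_of_ne_of_ne hk1 hk2]
            by_cases hl1 : l = i0
            · subst hl1
              rw [Equiv.swap_apply_left]
              refine ⟨hkl.trans hij, fun h => ?_⟩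
              rw [Prod.mk.injEq] at h
              exact hk1 h.1
            · by_cases hl2 : l = j0
              · subst hl2
                rw [Equiv.swap_apply_right]
                have hki : k < i0 := by
                  rcases lt_trichotomy k i0 with h | h | h
                  · exact h
                  · exact absurd h hk1
                  · exact absurd ⟨h, hkl⟩ hc1
                refine ⟨hki, fun h => ?_⟩
                rw [Prod.mk.injEq] at h
                exact hijne h.2
              · rw [Equiv.swap_apply_of_ne_of_ne hl1 hl2]
                exact ⟨hkl, hpne⟩
    have hinv : ∀ p ∈ S', e (e p) = p := by
      rintro ⟨k, l⟩ _
      by_cases hcond : (i0 < k ∧ k < j0) ∨ (i0 < l ∧ l < j0)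
      · have e1 : e (k, l) = (k, l) := by rw [he, if_pos hcond]
        rw [e1, e1]
      · obtain ⟨hc1, hc2⟩ := not_or.mp hcond
        have e1 : e (k, l) = (Equiv.swap i0 j0 k, Equiv.swap i0 j0 l) := by
          rw [he, if_neg hcond]
        have e2 : e (Equiv.swap i0 j0 k, Equiv.swap i0 j0 l) = (k, l) := by
          rw [he, if_neg (not_or.mpr ⟨hnb k hc1, hnb l hc2⟩),
            Equiv.swap_apply_self, Equiv.swap_apply_self]
        rw [e1, e2]
    have hfac : ∀ p ∈ S', P (τ p.1) (τ p.2) = P (σ (e p).1) (σ (e p).2) := by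
      rintro ⟨k, l⟩ hp
      rw [hmemS'] at hp
      obtain ⟨hkl, hpne⟩ := hp
      dsimp only at hkl ⊢
      by_cases hcond : (i0 < k ∧ k < j0) ∨ (i0 < l ∧ l < j0)
      · have e1 : e (k, l) = (k, l) := by rw [he, if_pos hcond]
        rw [e1]
        dsimp only
        rcases hcond with ⟨h1, h2⟩ | ⟨h1, h2⟩
        · rw [hτm k h1.ne' h2.ne]
          by_cases hl2 : l = j0
          · subst hl2
            rw [hτj0, hσj0]
            exact (hPkey k h1 h2).2
          · rw [hτm l (h1.trans hkl).ne' hl2]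
        · rw [hτm l h1.ne' h2.ne]
          by_cases hk1 : k = i0
          · subst hk1
            rw [hτi0, hσi0]
            exact (hPkey l h1 h2).1.symm
          · rw [hτm k hk1 (hkl.trans h2).ne]
      · have e1 : e (k, l) = (Equiv.swap i0 j0 k, Equiv.swap i0 j0 l) := by
          rw [he, if_neg hcond]
        rw [e1]
        dsimp only
        rw [hτs k, hτs l]
    exact Finset.prod_nbij' e e hemem hemem hinv hinv hfac
  rw [hprod]
  ring
end

section
/- Let P be the transition matrix of a Markov chain on a product state space Ω = Ω_1 × ⋯ × Ω_M that factors as a product: P^t(x,y) = ∏_i B_i^t(x_i,y_i), where each B_i is a transition matrix on Ω_i with stationary distribution π_i, and π = ∏_i π_i. Then the total variation distances satisfy 1 + 2·d_tv(P^t, π) ≤ ∏_i (1 + 2·d_tv(B_i^t, π_i)). -/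
open Finset

lemma aux_prod_ind {ι : Type*} (s : Finset ι) (u : ι → ℝ)
    (h0 : ∀ i, 0 ≤ u i) (h1 : ∀ i, u i ≤ 1) :
    1 + ∏ i ∈ s, (1 + u i) - ∏ i ∈ s, (1 - u i) ≤ ∏ i ∈ s, (1 + 2 * u i) := by
  induction s using Finset.cons_induction with
  | empty => simp
  | cons a s ha ih =>
    rw [Finset.prod_cons, Finset.prod_cons, Finset.prod_cons]
    have hA : (1:ℝ) ≤ ∏ i ∈ s, (1 + u i) := by
      calc (1:ℝ) = ∏ _i ∈ s, (1:ℝ) := by simp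
      _ ≤ _ := Finset.prod_le_prod (by intros; norm_num) (fun i _ => by linarith [h0 i])
    have hBle : ∏ i ∈ s, (1 - u i) ≤ 1 :=
      Finset.prod_le_one (fun i _ => by linarith [h1 i]) (fun i _ => by linarith [h0 i])
    have hB0' : (0:ℝ) ≤ ∏ i ∈ s, (1 - u i) :=
      Finset.prod_nonneg fun i _ => by linarith [h1 i]
    have hAC : ∏ i ∈ s, (1 + u i) ≤ ∏ i ∈ s, (1 + 2 * u i) :=
      Finset.prod_le_prod (fun i _ => by linarith [h0 i]) (fun i _ => by linarith [h0 i])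
    have hC1 : (1:ℝ) ≤ ∏ i ∈ s, (1 + 2 * u i) := le_trans hA hAC
    nlinarith [h0 a, h1 a, mul_nonneg (h0 a) (sub_nonneg.2 hAC),
      mul_nonneg (h0 a) (sub_nonneg.2 (le_trans hBle hC1))]


/-- For a product Markov chain, whose `t`-step transition probabilities factor as
`P^t(x,y) = ∏_i B_i^t(x_i, y_i)` with stationary distribution `π = ∏_i π_i`, the
worst-case total variation distances satisfy
`1 + 2·d_tv(P^t, π) ≤ ∏_i (1 + 2·d_tv(B_i^t, π_i))`. -/
theorem product_chain_tv_bound {ι : Type*} [Fintype ι] [DecidableEq ι] [Nonempty ι]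
    (Ω : ι → Type*) [∀ i, Fintype (Ω i)] [∀ i, Nonempty (Ω i)]
    (B : ∀ i, Ω i → Ω i → ℝ) (pi : ∀ i, Ω i → ℝ)
    (hB0 : ∀ i x y, 0 ≤ B i x y) (hBrow : ∀ i x, ∑ y, B i x y = 1)
    (hpi0 : ∀ i y, 0 ≤ pi i y) (hpisum : ∀ i, ∑ y, pi i y = 1) :
    1 + 2 * (⨆ x : ∀ i, Ω i,
        (1 / 2) * ∑ y : ∀ i, Ω i, |(∏ i, B i (x i) (y i)) - ∏ i, pi i (y i)|) ≤
      ∏ i, (1 + 2 * (⨆ x : Ω i, (1 / 2) * ∑ y, |B i x y - pi i y|)) := by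
  classical
  set d : ι → ℝ := fun i => ⨆ x : Ω i, (1/2) * ∑ y, |B i x y - pi i y| with hd
  have hd_ge : ∀ i (x : Ω i), (1/2) * ∑ y, |B i x y - pi i y| ≤ d i := by
    intro i x
    rw [hd]
    exact le_ciSup (f := fun x : Ω i => (1/2) * ∑ y, |B i x y - pi i y|)
      (Set.Finite.bddAbove (Set.finite_range _)) x
  have hd0 : ∀ i, 0 ≤ d i := fun i =>
    le_trans (by positivity) (hd_ge i (Classical.arbitrary _))
  have hP1 : (1:ℝ) ≤ ∏ i, (1 + 2 * d i) := by
    calc (1:ℝ) = ∏ _i : ι, (1:ℝ) := by simp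
    _ ≤ _ := Finset.prod_le_prod (by intros; norm_num) (fun i _ => by linarith [hd0 i])
  have key : ∀ x : ∀ i, Ω i,
      (1/2) * ∑ y : ∀ i, Ω i, |(∏ i, B i (x i) (y i)) - ∏ i, pi i (y i)| ≤
      (∏ i, (1 + 2 * d i) - 1) / 2 := by
    intro x
    set u : ι → ℝ := fun i => (1/2) * ∑ y, |B i (x i) y - pi i y| with hu
    have hu0 : ∀ i, 0 ≤ u i := fun i => by positivity
    have hu1 : ∀ i, u i ≤ 1 := by
      intro i
      have : ∑ y, |B i (x i) y - pi i y| ≤ ∑ y, (B i (x i) y + pi i y) :=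
        Finset.sum_le_sum fun y _ => by
          rw [abs_sub_le_iff]; constructor <;> nlinarith [hB0 i (x i) y, hpi0 i y]
      have h2 : ∑ y, (B i (x i) y + pi i y) = 2 := by
        rw [Finset.sum_add_distrib, hBrow i (x i), hpisum i]; norm_num
      simp only [hu]; linarith [this, h2.le]
    have hud : ∀ i, u i ≤ d i := fun i => hd_ge i (x i)
    -- pointwise bound and factorization
    have hmax : ∀ i, ∑ y, max (B i (x i) y) (pi i y) = 1 + u i := by
      intro i
      have : ∀ y, max (B i (x i) y) (pi i y)
          = ((B i (x i) y + pi i y) + |B i (x i) y - pi i y|) / 2 := fun y => by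
        rcases le_total (B i (x i) y) (pi i y) with h | h
        · rw [max_eq_right h, abs_of_nonpos (by linarith)]; ring
        · rw [max_eq_left h, abs_of_nonneg (by linarith)]; ring
      simp only [this]
      rw [← Finset.sum_div, Finset.sum_add_distrib, Finset.sum_add_distrib,
        hBrow i (x i), hpisum i]
      simp only [hu]
      ring
    have hmin : ∀ i, ∑ y, min (B i (x i) y) (pi i y) = 1 - u i := by
      intro i
      have : ∀ y, min (B i (x i) y) (pi i y)
          = ((B i (x i) y + pi i y) - |B i (x i) y - pi i y|) / 2 := fun y => by
        rcases le_total (B i (x i) y) (pi i y) with h | h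
        · rw [min_eq_left h, abs_of_nonpos (by linarith)]; ring
        · rw [min_eq_right h, abs_of_nonneg (by linarith)]; ring
      simp only [this]
      rw [← Finset.sum_div, Finset.sum_sub_distrib, Finset.sum_add_distrib,
        hBrow i (x i), hpisum i]
      simp only [hu]
      ring
    have hpt : ∀ y : ∀ i, Ω i,
        |(∏ i, B i (x i) (y i)) - ∏ i, pi i (y i)| ≤
        (∏ i, max (B i (x i) (y i)) (pi i (y i))) -
        (∏ i, min (B i (x i) (y i)) (pi i (y i))) := by
      intro y
      have h1 : ∏ i, B i (x i) (y i) ≤ ∏ i, max (B i (x i) (y i)) (pi i (y i)) :=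
        Finset.prod_le_prod (fun i _ => hB0 i (x i) (y i)) (fun i _ => le_max_left _ _)
      have h2 : ∏ i, pi i (y i) ≤ ∏ i, max (B i (x i) (y i)) (pi i (y i)) :=
        Finset.prod_le_prod (fun i _ => hpi0 i (y i)) (fun i _ => le_max_right _ _)
      have h3 : ∏ i, min (B i (x i) (y i)) (pi i (y i)) ≤ ∏ i, B i (x i) (y i) :=
        Finset.prod_le_prod (fun i _ => le_min (hB0 i (x i) (y i)) (hpi0 i (y i)))
          (fun i _ => min_le_left _ _)
      have h4 : ∏ i, min (B i (x i) (y i)) (pi i (y i)) ≤ ∏ i, pi i (y i) :=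
        Finset.prod_le_prod (fun i _ => le_min (hB0 i (x i) (y i)) (hpi0 i (y i)))
          (fun i _ => min_le_right _ _)
      rw [abs_sub_le_iff]; constructor <;> linarith
    have hsum : ∑ y : ∀ i, Ω i, |(∏ i, B i (x i) (y i)) - ∏ i, pi i (y i)| ≤
        ∏ i, (1 + u i) - ∏ i, (1 - u i) := by
      calc ∑ y : ∀ i, Ω i, |(∏ i, B i (x i) (y i)) - ∏ i, pi i (y i)|
          ≤ ∑ y : ∀ i, Ω i, ((∏ i, max (B i (x i) (y i)) (pi i (y i))) -
              (∏ i, min (B i (x i) (y i)) (pi i (y i)))) :=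
            Finset.sum_le_sum fun y _ => hpt y
        _ = (∑ y : ∀ i, Ω i, ∏ i, max (B i (x i) (y i)) (pi i (y i))) -
            (∑ y : ∀ i, Ω i, ∏ i, min (B i (x i) (y i)) (pi i (y i))) :=
            Finset.sum_sub_distrib _ _
        _ = (∏ i, ∑ z : Ω i, max (B i (x i) z) (pi i z)) -
            (∏ i, ∑ z : Ω i, min (B i (x i) z) (pi i z)) := by
            rw [Finset.prod_univ_sum, Finset.prod_univ_sum, Fintype.piFinset_univ]
        _ = ∏ i, (1 + u i) - ∏ i, (1 - u i) := by
            simp only [hmax, hmin]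
    have hind := aux_prod_ind Finset.univ u hu0 hu1
    have hmono : ∏ i, (1 + 2 * u i) ≤ ∏ i, (1 + 2 * d i) :=
      Finset.prod_le_prod (fun i _ => by linarith [hu0 i]) (fun i _ => by linarith [hud i])
    linarith
  have hsup : (⨆ x : ∀ i, Ω i,
      (1/2) * ∑ y : ∀ i, Ω i, |(∏ i, B i (x i) (y i)) - ∏ i, pi i (y i)|) ≤
      (∏ i, (1 + 2 * d i) - 1) / 2 := ciSup_le key
  linarith
end

section
/- The number of lattice paths from (0,n) to (n,0) (sequences of n steps +1 and n steps −1) whose maximum partial sum height reaches at least M = n − √n is at most C(2n,n) · √π · n^{3/2} · e^{−n/3}, for n ≥ 4 sufficiently large. -/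
open Finset Classical

/-- The partial sum (height) of a `±1` walk after `t` steps, where `true` encodes
a `+1` step and `false` a `−1` step. -/
def walkHeight {N : ℕ} (ω : Fin N → Bool) (t : ℕ) : ℤ :=
  ∑ j ∈ Finset.univ.filter (fun j : Fin N => j.val < t), (if ω j then (1 : ℤ) else -1)

lemma walkHeight_zero {N : ℕ} (ω : Fin N → Bool) : walkHeight ω 0 = 0 := by
  simp [walkHeight]

lemma walkHeight_congr {N : ℕ} {ω₁ ω₂ : Fin N → Bool} {t : ℕ}
    (h : ∀ j : Fin N, j.val < t → ω₁ j = ω₂ j) :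
    walkHeight ω₁ t = walkHeight ω₂ t := by
  unfold walkHeight
  refine Finset.sum_congr rfl fun j hj => ?_
  rw [Finset.mem_filter] at hj
  rw [h j hj.2]

lemma walkHeight_succ_le {N : ℕ} (ω : Fin N → Bool) (t : ℕ) :
    walkHeight ω (t + 1) ≤ walkHeight ω t + 1 := by
  by_cases ht : t < N
  · have hfilter : Finset.univ.filter (fun j : Fin N => j.val < t + 1)
        = insert ⟨t, ht⟩ (Finset.univ.filter (fun j : Fin N => j.val < t)) := by
      ext j
      simp only [Finset.mem_filter, Finset.mem_univ, true_and, Finset.mem_insert, Fin.ext_iff]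
      omega
    unfold walkHeight
    rw [hfilter, Finset.sum_insert (by simp)]
    have : (if ω ⟨t, ht⟩ then (1:ℤ) else -1) ≤ 1 := by split <;> norm_num
    linarith
  · have hfilter : Finset.univ.filter (fun j : Fin N => j.val < t + 1)
        = Finset.univ.filter (fun j : Fin N => j.val < t) := by
      ext j
      have := j.isLt
      simp only [Finset.mem_filter, Finset.mem_univ, true_and]
      omega
    unfold walkHeight
    rw [hfilter]
    linarith

lemma walkHeight_top {N : ℕ} (ω : Fin N → Bool) :
    walkHeight ω N = 2 * ((Finset.univ.filter (fun j : Fin N => ω j)).card : ℤ) - N := by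
  unfold walkHeight
  have h1 : Finset.univ.filter (fun j : Fin N => j.val < N) = Finset.univ := by
    ext j; simp [j.isLt]
  rw [h1]
  have h2 : ∀ j : Fin N, (if ω j then (1:ℤ) else -1) = 2 * (if ω j then 1 else 0) - 1 := by
    intro j; split <;> ring
  rw [Finset.sum_congr rfl (fun j _ => h2 j), Finset.sum_sub_distrib, ← Finset.mul_sum,
    Finset.sum_boole, Finset.sum_const, Finset.card_univ, Fintype.card_fin]
  simp

/-- The first time the walk's height reaches level `M` (or `0` if it never does). -/
noncomputable def hitTime {N : ℕ} (M : ℤ) (ω : Fin N → Bool) : ℕ :=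
  if h : ∃ t, M ≤ walkHeight ω t then Nat.find h else 0

/-- The walk reflected after its first hitting time of level `M`. -/
noncomputable def reflect {N : ℕ} (M : ℤ) (ω : Fin N → Bool) : Fin N → Bool :=
  fun j => if j.val < hitTime M ω then ω j else !ω j

lemma hit_exact {N : ℕ} {M : ℤ} (hM : 0 < M) {ω : Fin N → Bool}
    (hex : ∃ t, M ≤ walkHeight ω t) :
    walkHeight ω (hitTime M ω) = M ∧ ∀ t < hitTime M ω, walkHeight ω t < M := by
  have hht : hitTime M ω = Nat.find hex := dif_pos hex
  have hspec : M ≤ walkHeight ω (hitTime M ω) := hht ▸ Nat.find_spec hex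
  have hmin : ∀ t < hitTime M ω, walkHeight ω t < M := by
    intro t ht
    rw [hht] at ht
    have := Nat.find_min hex ht
    omega
  refine ⟨?_, hmin⟩
  have hne : hitTime M ω ≠ 0 := by
    intro h0
    rw [h0, walkHeight_zero] at hspec
    omega
  obtain ⟨t', ht'⟩ := Nat.exists_eq_succ_of_ne_zero hne
  have h1 : walkHeight ω t' < M := hmin t' (by omega)
  have h2 := walkHeight_succ_le ω t'
  rw [show t' + 1 = hitTime M ω by omega] at h2
  omega

lemma reflect_agree {N : ℕ} (M : ℤ) (ω : Fin N → Bool) {t : ℕ} (ht : t ≤ hitTime M ω) :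
    walkHeight (reflect M ω) t = walkHeight ω t :=
  walkHeight_congr fun j hj => by simp [reflect, if_pos (lt_of_lt_of_le hj ht)]

lemma hit_reflect {N : ℕ} {M : ℤ} (hM : 0 < M) {ω : Fin N → Bool}
    (hex : ∃ t, M ≤ walkHeight ω t) :
    M ≤ walkHeight (reflect M ω) (hitTime M ω) ∧
      ∀ t < hitTime M ω, walkHeight (reflect M ω) t < M := by
  obtain ⟨he, hmin⟩ := hit_exact hM hex
  constructor
  · rw [reflect_agree M ω le_rfl, he]
  · intro t ht
    rw [reflect_agree M ω ht.le]
    exact hmin t ht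

lemma reflect_top {N : ℕ} (M : ℤ) (ω : Fin N → Bool) :
    walkHeight (reflect M ω) N = 2 * walkHeight ω (hitTime M ω) - walkHeight ω N := by
  set τ := hitTime M ω with hτ
  have huniv : ∀ (σ : Fin N → Bool), walkHeight σ N
      = ∑ j ∈ Finset.univ.filter (fun j : Fin N => j.val < τ), (if σ j then (1:ℤ) else -1)
        + ∑ j ∈ Finset.univ.filter (fun j : Fin N => ¬ j.val < τ),
            (if σ j then (1:ℤ) else -1) := by
    intro σ
    unfold walkHeight
    have h1 : Finset.univ.filter (fun j : Fin N => j.val < N) = Finset.univ := by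
      ext j; simp [j.isLt]
    rw [h1, Finset.sum_filter_add_sum_filter_not]
  have e1 := huniv ω
  have e2 := huniv (reflect M ω)
  have e3 : ∑ j ∈ Finset.univ.filter (fun j : Fin N => j.val < τ),
      (if reflect M ω j then (1:ℤ) else -1) = walkHeight ω τ := by
    unfold walkHeight
    refine Finset.sum_congr rfl fun j hj => ?_
    rw [Finset.mem_filter] at hj
    simp [reflect, show j.val < hitTime M ω from hj.2]
  have e4 : ∑ j ∈ Finset.univ.filter (fun j : Fin N => ¬ j.val < τ),
      (if reflect M ω j then (1:ℤ) else -1)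
      = - ∑ j ∈ Finset.univ.filter (fun j : Fin N => ¬ j.val < τ),
            (if ω j then (1:ℤ) else -1) := by
    rw [← Finset.sum_neg_distrib]
    refine Finset.sum_congr rfl fun j hj => ?_
    rw [Finset.mem_filter] at hj
    have : reflect M ω j = !ω j := by simp [reflect, show ¬ j.val < hitTime M ω from hj.2]
    rw [this]
    cases ω j <;> simp
  have e5 : ∑ j ∈ Finset.univ.filter (fun j : Fin N => j.val < τ),
      (if ω j then (1:ℤ) else -1) = walkHeight ω τ := rfl
  rw [e2, e3, e4]
  rw [e1, e5]
  ring

lemma log_succ_le {k : ℕ} (hk : 0 < k) :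
    Real.log (k + 1) ≤ Real.log k + 1 / k := by
  have hk' : (0:ℝ) < k := by exact_mod_cast hk
  have h1 : Real.log ((k + 1 : ℝ) / k) ≤ (k + 1 : ℝ) / k - 1 :=
    Real.log_le_sub_one_of_pos (by positivity)
  rw [Real.log_div (by positivity) (by positivity)] at h1
  have h2 : (k + 1 : ℝ) / k - 1 = 1 / k := by field_simp; ring
  linarith [h1, h2 ▸ h1]

lemma staircase_lemmaA (s : ℕ) (hs : 2 ≤ s) :
    Real.log 2 + 2 * Real.log s ≤ (2 * Real.log 2 - 1/3) * s := by
  induction s, hs using Nat.le_induction with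
  | base =>
    have h := Real.log_two_gt_d9
    push_cast
    nlinarith
  | succ k hk ih =>
    have hk0 : (0:ℝ) < k := by positivity
    have h1 : Real.log (k + 1) ≤ Real.log k + 1 / k := log_succ_le (by omega)
    have h2 : (1:ℝ) / k ≤ 1 / 2 := by
      apply one_div_le_one_div_of_le <;> [norm_num; exact_mod_cast hk]
    have hc : (1:ℝ) ≤ 2 * Real.log 2 - 1/3 := by
      have := Real.log_two_gt_d9; linarith
    push_cast
    push_cast at ih
    nlinarith

lemma staircase_lemmaB (s n : ℕ) (hs : 2 ≤ s) (hn : s ^ 2 ≤ n) :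
    (s : ℝ) * Real.log (2 * n) ≤ (2 * Real.log 2 - 1/3) * n := by
  induction n, hn using Nat.le_induction with
  | base =>
    have hs0 : (0:ℝ) < s := by positivity
    have h1 : Real.log (2 * (s:ℝ)^2) = Real.log 2 + 2 * Real.log s := by
      rw [Real.log_mul (by norm_num) (by positivity), Real.log_pow]
      push_cast; ring
    have h2 := staircase_lemmaA s hs
    push_cast
    rw [h1]
    calc (s:ℝ) * (Real.log 2 + 2 * Real.log s) ≤ (s:ℝ) * ((2 * Real.log 2 - 1/3) * s) := by
          apply mul_le_mul_of_nonneg_left h2 (le_of_lt hs0)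
      _ = (2 * Real.log 2 - 1/3) * (s:ℝ)^2 := by ring
  | succ k hk ih =>
    have hk4 : 4 ≤ k := le_trans (by nlinarith) hk
    have hk0 : (0:ℝ) < k := by positivity
    have hs0 : (0:ℝ) < s := by positivity
    have h1 : Real.log (2 * ((k:ℝ) + 1)) ≤ Real.log (2 * k) + 1 / k := by
      have e1 : Real.log (2 * ((k:ℝ)+1)) = Real.log 2 + Real.log ((k:ℝ)+1) :=
        Real.log_mul two_ne_zero (by positivity)
      have e2 : Real.log (2 * (k:ℝ)) = Real.log 2 + Real.log (k:ℝ) :=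
        Real.log_mul two_ne_zero (ne_of_gt hk0)
      have h1' := log_succ_le (k := k) (by omega)
      push_cast at h1'
      linarith
    have hsk : (s:ℝ) / k ≤ 1 / 2 := by
      rw [div_le_div_iff₀ hk0 (by norm_num)]
      have hss : (s:ℝ) * s ≤ k := by exact_mod_cast (by nlinarith : s * s ≤ k)
      have hs2 : (2:ℝ) ≤ s := by exact_mod_cast hs
      nlinarith
    have hc : (1:ℝ) ≤ 2 * Real.log 2 - 1/3 := by
      have := Real.log_two_gt_d9; linarith
    push_cast
    calc (s:ℝ) * Real.log (2 * ((k:ℝ) + 1))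
        ≤ (s:ℝ) * (Real.log (2 * k) + 1 / k) := by
          exact mul_le_mul_of_nonneg_left h1 (le_of_lt hs0)
      _ = (s:ℝ) * Real.log (2 * k) + (s:ℝ) / k := by ring
      _ ≤ (2 * Real.log 2 - 1/3) * k + 1/2 := by push_cast at ih; linarith
      _ ≤ (2 * Real.log 2 - 1/3) * ((k:ℝ) + 1) := by nlinarith

/-- The number of staircase walks (balanced `±1` sequences of length `2n`) whose
maximum height reaches at least `M = n − √n` is at most
`C(2n,n) · √π · n^{3/2} · e^{−n/3}`, for `n ≥ 4`. -/
theorem staircase_high_walks_bound (n : ℕ) (hn : 4 ≤ n) :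
    ((Finset.univ.filter (fun ω : Fin (2 * n) → Bool =>
        (Finset.univ.filter (fun j : Fin (2 * n) => ω j)).card = n ∧
        ∃ t : ℕ, t ≤ 2 * n ∧ (n : ℝ) - Real.sqrt n ≤ (walkHeight ω t : ℝ))).card : ℝ) ≤
      (Nat.choose (2 * n) n : ℝ) * Real.sqrt Real.pi * (n : ℝ) ^ ((3 : ℝ) / 2) *
        Real.exp (-(n : ℝ) / 3) := by
  set s := Nat.sqrt n with hs_def
  have hs2 : 2 ≤ s := Nat.le_sqrt.mpr (by omega)
  have hsn : s ≤ n := Nat.sqrt_le_self n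
  have hssn : s ^ 2 ≤ n := by
    have := Nat.sqrt_le' n
    nlinarith [Nat.sqrt_le' n]
  set m := n - s with hm_def
  have hmn : m ≤ n := Nat.sub_le n s
  have hm0 : 0 < m := by
    have : s < n := by nlinarith
    omega
  have hms : m + s = n := by omega
  have hm0' : (0:ℤ) < (m:ℤ) := by exact_mod_cast hm0
  -- convert real event to integer threshold
  have hexOf : ∀ ω : Fin (2*n) → Bool,
      (∃ t : ℕ, t ≤ 2*n ∧ (n : ℝ) - Real.sqrt n ≤ (walkHeight ω t : ℝ)) →
      ∃ t, (m:ℤ) ≤ walkHeight ω t := by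
    rintro ω ⟨t, -, hreal⟩
    refine ⟨t, ?_⟩
    by_contra hcon
    push_neg at hcon
    have h1 : (walkHeight ω t : ℝ) ≤ (m:ℝ) - 1 := by
      have : walkHeight ω t ≤ (m:ℤ) - 1 := by omega
      exact_mod_cast this
    have hmr : (m:ℝ) = (n:ℝ) - (s:ℝ) := by
      rw [hm_def]
      push_cast [Nat.cast_sub hsn]
      ring
    have h2 : (s:ℝ) + 1 ≤ Real.sqrt n := by
      rw [hmr] at h1
      linarith
    have h3 : ((s:ℝ) + 1) ^ 2 ≤ (n:ℝ) := by
      rw [Real.le_sqrt (by positivity) (by positivity)] at h2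
      exact h2
    have h4 : (s + 1) ^ 2 ≤ n := by exact_mod_cast h3
    have h5 := Nat.lt_succ_sqrt' n
    rw [Nat.succ_eq_add_one, ← hs_def] at h5
    omega
  -- injection into powersetCard via reflection at the first hitting time
  have hcard : ((Finset.univ.filter (fun ω : Fin (2 * n) → Bool =>
        (Finset.univ.filter (fun j : Fin (2 * n) => ω j)).card = n ∧
        ∃ t : ℕ, t ≤ 2 * n ∧ (n : ℝ) - Real.sqrt n ≤ (walkHeight ω t : ℝ))).card)
      ≤ (2*n).choose s := by
    have hpc : (Finset.powersetCard (n+m) (Finset.univ : Finset (Fin (2*n)))).card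
        = (2*n).choose (n+m) := by
      rw [Finset.card_powersetCard, Finset.card_univ, Fintype.card_fin]
    have hsymm : (2*n).choose (n+m) = (2*n).choose s := by
      have h2ns : n + m = 2*n - s := by omega
      rw [h2ns, Nat.choose_symm (by omega)]
    rw [← hsymm, ← hpc]
    apply Finset.card_le_card_of_injOn
      (fun ω => Finset.univ.filter (fun j => reflect (m:ℤ) ω j))
    · -- maps to
      intro ω hω
      rw [Finset.mem_coe, Finset.mem_filter] at hω
      obtain ⟨-, hbal, hev⟩ := hω
      have hex := hexOf ω hev
      rw [Finset.mem_coe, Finset.mem_powersetCard]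
      refine ⟨Finset.subset_univ _, ?_⟩
      have h0 : walkHeight ω (2*n) = 0 := by
        rw [walkHeight_top, hbal]
        push_cast
        ring
      have hτ : walkHeight ω (hitTime (m:ℤ) ω) = m := (hit_exact hm0' hex).1
      have hrt := reflect_top (m:ℤ) ω
      rw [h0, hτ] at hrt
      have htop := walkHeight_top (reflect (m:ℤ) ω)
      rw [hrt] at htop
      push_cast at htop
      dsimp only
      omega
    · -- injective
      intro ω₁ h₁ ω₂ h₂ heq
      rw [Finset.mem_coe, Finset.mem_filter] at h₁ h₂ <;> try rw [Finset.mem_filter] at h₁ h₂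
      have hex₁ := hexOf ω₁ h₁.2.2
      have hex₂ := hexOf ω₂ h₂.2.2
      have hre : reflect (m:ℤ) ω₁ = reflect (m:ℤ) ω₂ := by
        funext j
        have hj := Finset.ext_iff.mp heq j
        simp only [Finset.mem_filter, Finset.mem_univ, true_and] at hj
        cases hA : reflect (m:ℤ) ω₁ j <;> cases hB : reflect (m:ℤ) ω₂ j <;> simp_all
      have hτeq : hitTime (m:ℤ) ω₁ = hitTime (m:ℤ) ω₂ := by
        obtain ⟨ha₁, hb₁⟩ := hit_reflect hm0' hex₁
        obtain ⟨ha₂, hb₂⟩ := hit_reflect hm0' hex₂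
        rw [hre] at ha₁ hb₁
        by_contra hne
        rcases lt_or_gt_of_ne hne with hlt | hgt
        · exact absurd ha₁ (not_le.mpr (hb₂ _ hlt))
        · exact absurd ha₂ (not_le.mpr (hb₁ _ hgt))
      funext j
      have hrj := congrFun hre j
      by_cases hj : j.val < hitTime (m:ℤ) ω₁
      · have hj' : j.val < hitTime (m:ℤ) ω₂ := hτeq ▸ hj
        have e1 : reflect (m:ℤ) ω₁ j = ω₁ j := by simp [reflect, hj]
        have e2 : reflect (m:ℤ) ω₂ j = ω₂ j := by simp [reflect, hj']
        rw [← e1, ← e2, hrj]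
      · have hj' : ¬ j.val < hitTime (m:ℤ) ω₂ := hτeq ▸ hj
        have e1 : reflect (m:ℤ) ω₁ j = !ω₁ j := by simp [reflect, hj]
        have e2 : reflect (m:ℤ) ω₂ j = !ω₂ j := by simp [reflect, hj']
        apply Bool.not_inj
        rw [← e1, ← e2, hrj]
  -- numeric chain
  have hnR : (1:ℝ) ≤ (n:ℝ) := by
    have h1n : 1 ≤ n := le_trans (by norm_num) hn
    exact_mod_cast h1n
  have key : ((2*n : ℕ) : ℝ) ^ s ≤ 4 ^ n * Real.exp (-(n:ℝ) / 3) := by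
    have hl : (0:ℝ) < ((2*n:ℕ):ℝ) ^ s := by positivity
    have hr : (0:ℝ) < (4:ℝ) ^ n * Real.exp (-(n:ℝ) / 3) := by positivity
    rw [← Real.log_le_log_iff hl hr]
    rw [Real.log_pow, Real.log_mul (by positivity) (Real.exp_ne_zero _), Real.log_exp,
      Real.log_pow]
    have h4 : Real.log 4 = 2 * Real.log 2 := by
      rw [show (4:ℝ) = 2^2 by norm_num, Real.log_pow]
      push_cast; ring
    have hB := staircase_lemmaB s n hs2 hssn
    push_cast
    push_cast at hB
    rw [h4]
    linarith
  have c4 : (4:ℝ) ^ n ≤ (n:ℝ) * ((2*n).choose n : ℝ) := by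
    have := Nat.four_pow_lt_mul_centralBinom n hn
    rw [Nat.centralBinom_eq_two_mul_choose] at this
    exact_mod_cast this.le
  have c5 : (n:ℝ) ≤ Real.sqrt Real.pi * (n:ℝ) ^ ((3:ℝ)/2) := by
    have h1 : (1:ℝ) ≤ Real.sqrt Real.pi := by
      rw [show (1:ℝ) = Real.sqrt 1 by simp]
      exact Real.sqrt_le_sqrt (by linarith [Real.pi_gt_three])
    have h2 : (n:ℝ) ≤ (n:ℝ) ^ ((3:ℝ)/2) := by
      calc (n:ℝ) = (n:ℝ) ^ (1:ℝ) := (Real.rpow_one _).symm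
        _ ≤ (n:ℝ) ^ ((3:ℝ)/2) := Real.rpow_le_rpow_of_exponent_le hnR (by norm_num)
    nlinarith [Real.rpow_nonneg (by positivity : (0:ℝ) ≤ (n:ℝ)) ((3:ℝ)/2)]
  have cpos : (0:ℝ) ≤ ((2*n).choose n : ℝ) := by positivity
  have epos : (0:ℝ) < Real.exp (-(n:ℝ) / 3) := Real.exp_pos _
  calc ((Finset.univ.filter (fun ω : Fin (2 * n) → Bool =>
        (Finset.univ.filter (fun j : Fin (2 * n) => ω j)).card = n ∧
        ∃ t : ℕ, t ≤ 2 * n ∧ (n : ℝ) - Real.sqrt n ≤ (walkHeight ω t : ℝ))).card : ℝ)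
      ≤ ((2*n).choose s : ℝ) := by exact_mod_cast hcard
    _ ≤ ((2*n:ℕ):ℝ) ^ s := by exact_mod_cast Nat.choose_le_pow (2*n) s
    _ ≤ 4 ^ n * Real.exp (-(n:ℝ) / 3) := key
    _ ≤ ((n:ℝ) * ((2*n).choose n : ℝ)) * Real.exp (-(n:ℝ) / 3) :=
        mul_le_mul_of_nonneg_right c4 epos.le
    _ ≤ (((2*n).choose n : ℝ) * (Real.sqrt Real.pi * (n:ℝ) ^ ((3:ℝ)/2)))
          * Real.exp (-(n:ℝ) / 3) := by
        apply mul_le_mul_of_nonneg_right _ epos.le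
        calc (n:ℝ) * ((2*n).choose n : ℝ) = ((2*n).choose n : ℝ) * (n:ℝ) := by ring
          _ ≤ ((2*n).choose n : ℝ) * (Real.sqrt Real.pi * (n:ℝ) ^ ((3:ℝ)/2)) :=
            mul_le_mul_of_nonneg_left c5 cpos
    _ = (Nat.choose (2 * n) n : ℝ) * Real.sqrt Real.pi * (n : ℝ) ^ ((3 : ℝ) / 2) *
        Real.exp (-(n : ℝ) / 3) := by ring
end
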